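/- Let (→α)_{α∈I} be a family of relations indexed by a set I equipped with a well-founded strict order ≻. Suppose every local peak b ←α a →β c (α, β ∈ I) is decreasing, i.e. there exists d with b ↠_{≺α} ∘ →=_{⪯β} ∘ ↠_{≺{α,β}} d and c ↠_{≺β} ∘ →=_{⪯α} ∘ ↠_{≺{α,β}} d, where →_K denotes the union of →γ over γ ∈ K, ≺α = {γ | γ ≺ α} and ≺{α,β} = {γ | γ ≺ α or γ ≺ β}, and ⪯β = {γ | γ ≺ β or γ = β}. Then the union ⋃_{α∈I} →α is confluent. -/

import Mathlib

/-- The union of a family of relations, restricted to labels in a set `K`. -/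
def LabelStep {I E : Type*} (r : I → E → E → Prop) (K : Set I) : E → E → Prop :=
  fun a b => ∃ γ ∈ K, r γ a b

namespace DDProof

open Relation List Multiset

attribute [local instance] Classical.propDecidable

variable {I : Type*} (lt : I → I → Prop)

local notation "TG" => Relation.TransGen lt

/-- List filter with a Prop predicate (classical). -/
noncomputable def Lf (p : I → Prop) (l : List I) : List I :=
  l.filter (fun x => decide (p x))

/-- Multiset filter with a Prop predicate (classical). -/
noncomputable def Mf (p : I → Prop) (s : Multiset I) : Multiset I :=
  Multiset.filter p s

@[simp] theorem mem_Lf {p : I → Prop} {l : List I} {x : I} :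
    x ∈ Lf p l ↔ x ∈ l ∧ p x := by
  simp [Lf, List.mem_filter]

theorem Lf_nil {p : I → Prop} : Lf p ([] : List I) = [] := rfl

theorem Lf_cons {p : I → Prop} {x : I} {l : List I} :
    Lf p (x :: l) = if p x then x :: Lf p l else Lf p l := by
  simp only [Lf, List.filter_cons]
  split <;> simp_all

theorem Lf_append {p : I → Prop} {l₁ l₂ : List I} :
    Lf p (l₁ ++ l₂) = Lf p l₁ ++ Lf p l₂ := by
  simp [Lf, List.filter_append]

theorem Lf_congr {p q : I → Prop} {l : List I} (h : ∀ x ∈ l, p x ↔ q x) :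
    Lf p l = Lf q l := by
  apply List.filter_congr
  intro x hx
  simp [h x hx]

theorem Lf_Lf {p q : I → Prop} {l : List I} :
    Lf p (Lf q l) = Lf (fun x => q x ∧ p x) l := by
  simp only [Lf, List.filter_filter]
  apply List.filter_congr; intro x hx
  by_cases h1 : p x <;> by_cases h2 : q x <;> simp [h1, h2]

theorem Lf_comm {p q : I → Prop} {l : List I} :
    Lf p (Lf q l) = Lf q (Lf p l) := by
  rw [Lf_Lf, Lf_Lf]
  exact Lf_congr (fun x _ => and_comm)

theorem length_Lf_le {p : I → Prop} {l : List I} : (Lf p l).length ≤ l.length :=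
  List.length_filter_le _ _

theorem Lf_eq_self {p : I → Prop} {l : List I} (h : ∀ x ∈ l, p x) : Lf p l = l := by
  induction l with
  | nil => rfl
  | cons x l ih =>
    rw [Lf_cons, if_pos (h x (by simp))]
    rw [ih (fun y hy => h y (by simp [hy]))]

/-- `y` is strictly below some element of the list `L`. -/
def bel (y : I) (L : List I) : Prop := ∃ x ∈ L, TG y x

/-- keep-predicate: not strictly below any element of `L`. -/
def kp (L : List I) (y : I) : Prop := ¬ bel lt y L

@[simp] theorem bel_nil {y : I} : ¬ bel lt y ([] : List I) := by simp [bel]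

@[simp] theorem bel_cons {y x : I} {L : List I} :
    bel lt y (x :: L) ↔ TG y x ∨ bel lt y L := by simp [bel]

@[simp] theorem bel_append {y : I} {L₁ L₂ : List I} :
    bel lt y (L₁ ++ L₂) ↔ bel lt y L₁ ∨ bel lt y L₂ := by
  simp [bel, or_and_right, exists_or]

/-- Upward-closed ("keep") predicates. -/
def DC (p : I → Prop) : Prop := ∀ ⦃y z⦄, TG y z → p y → p z

theorem DC_kp {L : List I} : DC lt (kp lt L) := by
  intro y z hyz hy hbel
  rcases hbel with ⟨x, hx, hzx⟩
  exact hy ⟨x, hx, hyz.trans hzx⟩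

theorem DC_and {p q : I → Prop} (hp : DC lt p) (hq : DC lt q) :
    DC lt (fun x => p x ∧ q x) :=
  fun _ _ h hx => ⟨hp h hx.1, hq h hx.2⟩

/-! ### Multiset filter lemmas -/

@[simp] theorem mem_Mf {p : I → Prop} {s : Multiset I} {x : I} :
    x ∈ Mf p s ↔ x ∈ s ∧ p x := by
  simp [Mf, Multiset.mem_filter]

theorem Mf_add {p : I → Prop} {s t : Multiset I} :
    Mf p (s + t) = Mf p s + Mf p t := Multiset.filter_add _ _ _

theorem Mf_le {p : I → Prop} {s : Multiset I} : Mf p s ≤ s := Multiset.filter_le _ _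

theorem Mf_congr {p q : I → Prop} {s : Multiset I} (h : ∀ x ∈ s, p x ↔ q x) :
    Mf p s = Mf q s := Multiset.filter_congr h

theorem Mf_cons {p : I → Prop} {x : I} {s : Multiset I} :
    Mf p (x ::ₘ s) = if p x then x ::ₘ Mf p s else Mf p s := by
  rw [Mf, Multiset.filter_cons]
  split <;> simp [Mf, Multiset.singleton_add]

theorem Mf_zero {p : I → Prop} : Mf p (0 : Multiset I) = 0 := rfl

theorem Mf_add_not {p : I → Prop} (s : Multiset I) :
    Mf p s + Mf (fun x => ¬ p x) s = s := by
  induction s using Multiset.induction with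
  | empty => simp [Mf_zero]
  | cons a s ih =>
    rw [Mf_cons, Mf_cons]
    by_cases h : p a
    · simp only [if_pos h, if_neg (not_not_intro h)]
      rw [Multiset.cons_add, ih]
    · simp only [if_neg h, if_pos h]
      rw [Multiset.add_cons, ih]

theorem Mf_Mf {p q : I → Prop} {s : Multiset I} :
    Mf p (Mf q s) = Mf (fun x => q x ∧ p x) s := by
  induction s using Multiset.induction with
  | empty => simp [Mf_zero]
  | cons a s ih =>
    by_cases h1 : q a <;> by_cases h2 : p a <;>
      simp [Mf_cons, h1, h2, ih]

theorem Mf_eq_zero {p : I → Prop} {s : Multiset I} (h : ∀ x ∈ s, ¬ p x) :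
    Mf p s = 0 := by
  rw [Mf, Multiset.filter_eq_nil]
  exact h

theorem Mf_eq_self {p : I → Prop} {s : Multiset I} (h : ∀ x ∈ s, p x) :
    Mf p s = s := by
  rw [Mf, Multiset.filter_eq_self]
  exact h

/-! ### The lexmax measure of a list of labels -/

noncomputable def mes : List I → Multiset I
  | [] => 0
  | x :: l => x ::ₘ mes (Lf (kp lt [x]) l)
termination_by l => l.length
decreasing_by
  simpa using Nat.lt_succ_of_le length_Lf_le

@[simp] theorem mes_nil : mes lt ([] : List I) = 0 := by simp [mes]

theorem mes_cons {x : I} {l : List I} :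
    mes lt (x :: l) = x ::ₘ mes lt (Lf (kp lt [x]) l) := by
  rw [mes]

theorem mem_of_mem_mes_aux :
    ∀ (n : ℕ) (l : List I), l.length ≤ n → ∀ x ∈ mes lt l, x ∈ l := by
  intro n
  induction n with
  | zero =>
    intro l hl x hx
    rw [List.length_eq_zero_iff.1 (Nat.le_zero.1 hl)] at hx
    simp at hx
  | succ n ih =>
    intro l hl x hx
    match l with
    | [] => simp at hx
    | y :: l' =>
      rw [mes_cons] at hx
      rcases Multiset.mem_cons.1 hx with h | h
      · simp [h]
      · have hlen : (Lf (kp lt [y]) l').length ≤ n := by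
          have := length_Lf_le (p := kp lt [y]) (l := l')
          simp at hl; omega
        have := ih _ hlen x h
        exact List.mem_cons_of_mem _ (mem_Lf.1 this).1

theorem mem_of_mem_mes {l : List I} {x : I} (h : x ∈ mes lt l) : x ∈ l :=
  mem_of_mem_mes_aux lt l.length l le_rfl x h
/-! ### mes commutes with upward-closed filters -/

theorem mes_Lf_aux {p : I → Prop} (hp : DC lt p) :
    ∀ (n : ℕ) (l : List I), l.length ≤ n → mes lt (Lf p l) = Mf p (mes lt l) := by
  intro n
  induction n with
  | zero =>
    intro l hl
    rw [List.length_eq_zero_iff.1 (Nat.le_zero.1 hl)]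
    simp [Lf_nil, Mf_zero]
  | succ n ih =>
    intro l hl
    match l with
    | [] => simp [Lf_nil, Mf_zero]
    | x :: l' =>
      have hlen : ∀ q : I → Prop, (Lf q l').length ≤ n := by
        intro q
        have := length_Lf_le (p := q) (l := l')
        simp at hl; omega
      by_cases hx : p x
      · rw [Lf_cons, if_pos hx, mes_cons, mes_cons, Mf_cons, if_pos hx]
        congr 1
        rw [Lf_comm, ih _ (hlen _)]
      · rw [Lf_cons, if_neg hx, mes_cons, Mf_cons, if_neg hx,
          ← ih (Lf (kp lt [x]) l') (hlen (kp lt [x]))]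
        congr 1
        rw [Lf_Lf]
        apply Lf_congr
        intro y _
        constructor
        · intro hy
          refine ⟨fun hbel => ?_, hy⟩
          rcases hbel with ⟨z, hz, hyz⟩
          rcases List.mem_singleton.1 hz with rfl
          exact hx (hp hyz hy)
        · exact fun h => h.2

theorem mes_Lf {p : I → Prop} (hp : DC lt p) {l : List I} :
    mes lt (Lf p l) = Mf p (mes lt l) :=
  mes_Lf_aux lt hp l.length l le_rfl

/-- Splitting the measure along an upward-closed predicate. -/
theorem mes_split {p : I → Prop} (hp : DC lt p) {l : List I} :
    mes lt l = mes lt (Lf p l) + Mf (fun x => ¬ p x) (mes lt l) := by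
  rw [mes_Lf lt hp]
  exact (Mf_add_not _).symm

/-! ### mes of an append -/

theorem mes_append_aux :
    ∀ (n : ℕ) (l₁ l₂ : List I), l₁.length ≤ n →
      mes lt (l₁ ++ l₂) = mes lt l₁ + mes lt (Lf (kp lt l₁) l₂) := by
  intro n
  induction n with
  | zero =>
    intro l₁ l₂ hl
    rw [List.length_eq_zero_iff.1 (Nat.le_zero.1 hl)]
    rw [List.nil_append, mes_nil, zero_add]
    congr 1
    exact (Lf_eq_self (fun x _ => by simp [kp])).symm
  | succ n ih =>
    intro l₁ l₂ hl
    match l₁ with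
    | [] =>
      rw [List.nil_append, mes_nil, zero_add]
      congr 1
      exact (Lf_eq_self (fun x _ => by simp [kp])).symm
    | x :: l₁' =>
      have hlen : (Lf (kp lt [x]) l₁').length ≤ n := by
        have := length_Lf_le (p := kp lt [x]) (l := l₁')
        simp at hl; omega
      rw [List.cons_append, mes_cons, Lf_append, ih _ _ hlen, mes_cons,
        Multiset.cons_add]
      congr 2
      rw [Lf_Lf]
      apply congrArg
      apply Lf_congr
      intro y _
      constructor
      · rintro ⟨h1, h2⟩
        intro hbel
        rcases bel_cons lt |>.1 hbel with h | ⟨z, hz, hyz⟩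
        · exact h1 (by simp [h])
        · by_cases hzx : TransGen lt z x
          · exact h1 (by simp [Relation.TransGen.trans hyz hzx])
          · exact h2 ⟨z, mem_Lf.2 ⟨hz, fun hb => hzx (by
              rcases hb with ⟨w, hw, hzw⟩
              rcases List.mem_singleton.1 hw with rfl
              exact hzw)⟩, hyz⟩
      · intro h
        constructor
        · intro hb
          rcases hb with ⟨w, hw, hyw⟩
          rcases List.mem_singleton.1 hw with rfl
          exact h (by simp [hyw])
        · intro hb
          rcases hb with ⟨z, hz, hyz⟩
          rcases mem_Lf.1 hz with ⟨hz1, _⟩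
          exact h (by simp [bel]; exact Or.inr ⟨z, hz1, hyz⟩)

theorem mes_append {l₁ l₂ : List I} :
    mes lt (l₁ ++ l₂) = mes lt l₁ + mes lt (Lf (kp lt l₁) l₂) :=
  mes_append_aux lt l₁.length l₁ l₂ le_rfl

/-! ### every list element is dominated by a measure element -/

theorem mes_dominates_aux :
    ∀ (n : ℕ) (l : List I), l.length ≤ n → ∀ x ∈ l,
      x ∈ mes lt l ∨ ∃ y ∈ mes lt l, Relation.TransGen lt x y := by
  intro n
  induction n with
  | zero =>
    intro l hl x hx
    rw [List.length_eq_zero_iff.1 (Nat.le_zero.1 hl)] at hx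
    simp at hx
  | succ n ih =>
    intro l hl x hx
    match l with
    | [] => simp at hx
    | z :: l' =>
      have hlen : (Lf (kp lt [z]) l').length ≤ n := by
        have := length_Lf_le (p := kp lt [z]) (l := l')
        simp at hl; omega
      rcases List.mem_cons.1 hx with rfl | hx'
      · left; rw [mes_cons]; exact Multiset.mem_cons_self _ _
      · by_cases hk : kp lt [z] x
        · rcases ih _ hlen x (mem_Lf.2 ⟨hx', hk⟩) with h | ⟨y, hy, hxy⟩
          · left; rw [mes_cons]; exact Multiset.mem_cons_of_mem h
          · right; exact ⟨y, by rw [mes_cons]; exact Multiset.mem_cons_of_mem hy, hxy⟩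
        · right
          refine ⟨z, by rw [mes_cons]; exact Multiset.mem_cons_self _ _, ?_⟩
          rcases not_not.1 (by simpa [kp] using hk) with h
          simpa using h
/-! ### The Dershowitz–Manna order, via `Relation.CutExpand` -/

/-- DM-less-or-equal. -/
def dmle : Multiset I → Multiset I → Prop :=
  Relation.ReflTransGen (Relation.CutExpand TG)

/-- DM-strictly-less. -/
def dmlt : Multiset I → Multiset I → Prop :=
  Relation.TransGen (Relation.CutExpand TG)

theorem dmlt_wf (hwf : WellFounded lt) : WellFounded (dmlt lt) :=
  (hwf.transGen.cutExpand).transGen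

theorem dmle_refl {N : Multiset I} : dmle lt N N := Relation.ReflTransGen.refl

theorem dmle_trans {A B C : Multiset I} (h1 : dmle lt A B) (h2 : dmle lt B C) :
    dmle lt A C := h1.trans h2

theorem dmle_of_dmlt {A B : Multiset I} (h : dmlt lt A B) : dmle lt A B :=
  h.to_reflTransGen

theorem dmlt_of_dmle_dmlt {A B C : Multiset I} (h1 : dmle lt A B) (h2 : dmlt lt B C) :
    dmlt lt A C := h2.trans_right h1

theorem dmlt_of_dmlt_dmle {A B C : Multiset I} (h1 : dmlt lt A B) (h2 : dmle lt B C) :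
    dmlt lt A C := h1.trans_left h2

theorem dmle_add_left {N M : Multiset I} (K : Multiset I) (h : dmle lt N M) :
    dmle lt (K + N) (K + M) :=
  Relation.ReflTransGen.lift (fun s => K + s)
    (fun _ _ hab => (Relation.cutExpand_add_left K).2 hab) _ _ h

theorem dmle_add_right {N M : Multiset I} (K : Multiset I) (h : dmle lt N M) :
    dmle lt (N + K) (M + K) := by
  rw [add_comm N K, add_comm M K]; exact dmle_add_left lt K h

theorem dmle_add {N M N' M' : Multiset I} (h : dmle lt N M) (h' : dmle lt N' M') :
    dmle lt (N + N') (M + M') :=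
  dmle_trans lt (dmle_add_left lt N h') (dmle_add_right lt M' h)

theorem dmle_of_le {N M : Multiset I} (h : N ≤ M) : dmle lt N M := by
  rcases Multiset.le_iff_exists_add.1 h with ⟨D, rfl⟩
  clear h
  induction D using Multiset.induction with
  | empty => simpa using dmle_refl lt
  | cons a D ih =>
    refine Relation.ReflTransGen.trans ih ?_
    refine Relation.ReflTransGen.single ?_
    refine ⟨0, a, by simp, ?_⟩
    rw [add_zero, Multiset.add_cons, ← Multiset.singleton_add, add_comm]

theorem dmlt_exchange_aux :
    ∀ (n : ℕ) (X : Multiset I), Multiset.card X ≤ n → X ≠ 0 →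
      ∀ (C Y : Multiset I), (∀ y ∈ Y, ∃ x ∈ X, Relation.TransGen lt y x) →
      dmlt lt (C + Y) (C + X) := by
  intro n
  induction n with
  | zero =>
    intro X hX hX0 C Y hY
    rw [Multiset.card_eq_zero.1 (Nat.le_zero.1 hX)] at hX0
    exact absurd rfl hX0
  | succ n ih =>
    intro X hX hX0 C Y hY
    rcases Multiset.exists_mem_of_ne_zero hX0 with ⟨a, ha⟩
    rcases Multiset.exists_cons_of_mem ha with ⟨X', rfl⟩
    by_cases hX' : X' = 0
    · subst hX'
      refine Relation.TransGen.single ?_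
      refine ⟨Y, a, ?_, ?_⟩
      · intro y hy
        rcases hY y hy with ⟨x, hx, hyx⟩
        rcases Multiset.mem_cons.1 hx with rfl | hx0
        · exact hyx
        · simp at hx0
      · show C + Y + {a} = C + (a ::ₘ 0) + Y
        rw [show (a ::ₘ (0 : Multiset I)) = {a} from rfl]
        abel
    · set p : I → Prop := fun y => ∃ x ∈ X', Relation.TransGen lt y x with hp
      set Y₂ := Mf p Y with hY₂
      set Y₁ := Mf (fun y => ¬ p y) Y with hY₁
      have hsplit : Y₂ + Y₁ = Y := Mf_add_not Y
      have hcard : Multiset.card X' ≤ n := by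
        have := Multiset.card_cons a X'
        omega
      have step2 : dmlt lt ((C + Y₁) + Y₂) ((C + Y₁) + X') := by
        refine ih X' hcard hX' (C + Y₁) Y₂ ?_
        intro y hy
        exact (mem_Mf.1 hy).2
      have step1 : Relation.CutExpand TG ((C + X') + Y₁) ((C + X') + {a}) := by
        refine ⟨Y₁, a, ?_, ?_⟩
        · intro y hy
          rcases mem_Mf.1 hy with ⟨hyY, hnp⟩
          rcases hY y hyY with ⟨x, hx, hyx⟩
          rcases Multiset.mem_cons.1 hx with rfl | hx0
          · exact hyx
          · exact absurd ⟨x, hx0, hyx⟩ hnp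
        · show C + X' + Y₁ + {a} = C + X' + {a} + Y₁
          abel
      have e1 : (C + Y₁) + Y₂ = C + Y := by
        rw [add_assoc, add_comm Y₁ Y₂, hsplit]
      have e2 : (C + Y₁) + X' = (C + X') + Y₁ := by
        rw [add_assoc, add_assoc, add_comm Y₁ X']
      have e3 : (C + X') + {a} = C + (a ::ₘ X') := by
        rw [add_assoc, add_comm X' {a}, Multiset.singleton_add]
      rw [e1, e2] at step2
      rw [e3] at step1
      exact Relation.TransGen.tail step2 step1

theorem dmlt_exchange {X : Multiset I} (C Y : Multiset I) (hX0 : X ≠ 0)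
    (hY : ∀ y ∈ Y, ∃ x ∈ X, Relation.TransGen lt y x) :
    dmlt lt (C + Y) (C + X) :=
  dmlt_exchange_aux lt (Multiset.card X) X le_rfl hX0 C Y hY

theorem dmle_exchange {X : Multiset I} (C Y : Multiset I)
    (hY : ∀ y ∈ Y, ∃ x ∈ X, Relation.TransGen lt y x) :
    dmle lt (C + Y) (C + X) := by
  by_cases hX0 : X = 0
  · subst hX0
    have : Y = 0 := by
      by_contra hY0
      rcases Multiset.exists_mem_of_ne_zero hY0 with ⟨y, hy⟩
      rcases hY y hy with ⟨x, hx, _⟩; simp at hx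
    rw [this]
    exact dmle_refl lt
  · exact dmle_of_dmlt lt (dmlt_exchange lt C Y hX0 hY)

/-- A multiset dominated elementwise is DM-below. -/
theorem dmle_of_dn {N K : Multiset I}
    (h : ∀ y ∈ N, ∃ x ∈ K, Relation.TransGen lt y x) : dmle lt N K := by
  have := dmle_exchange lt (0 : Multiset I) N h
  simpa using this

/-- Elementwise characterisation along DM-le. -/
theorem dmle_elem (hwf : WellFounded lt) {N M : Multiset I} (h : dmle lt N M) :
    ∀ n ∈ N, ∃ m ∈ M, n = m ∨ Relation.TransGen lt n m := by
  induction h with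
  | refl => exact fun n hn => ⟨n, hn, Or.inl rfl⟩
  | @tail b c _hab hbc ih =>
    intro n hn
    rcases ih n hn with ⟨m, hm, hnm⟩
    -- now m ∈ b and CutExpand TG b c
    rcases hbc with ⟨t, a, ht, he⟩
    have hmbc : m ∈ c + t := by
      rw [← he]
      exact Multiset.mem_add.2 (Or.inl hm)
    have hac : a ∈ c := by
      have : a ∈ c + t := by
        rw [← he]; exact Multiset.mem_add.2 (Or.inr (Multiset.mem_singleton_self a))
      rcases Multiset.mem_add.1 this with h1 | h1
      · exact h1
      · exact absurd (ht a h1) (fun hh =>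
          (@WellFounded.isIrrefl _ _ (hwf.transGen)).irrefl a hh)
    rcases Multiset.mem_add.1 hmbc with h1 | h1
    · exact ⟨m, h1, hnm⟩
    · refine ⟨a, hac, Or.inr ?_⟩
      rcases hnm with h | h
      · subst h; exact ht _ h1
      · exact h.trans (ht _ h1)

/-- DM-le is preserved by upward-closed filters. -/
theorem dmle_Mf {p : I → Prop} (hp : DC lt p) {N M : Multiset I} (h : dmle lt N M) :
    dmle lt (Mf p N) (Mf p M) := by
  induction h with
  | refl => exact dmle_refl lt
  | @tail b c _hab hbc ih =>
    refine dmle_trans lt ih ?_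
    rcases hbc with ⟨t, a, ht, he⟩
    by_cases hpa : p a
    · refine Relation.ReflTransGen.single ?_
      refine ⟨Mf p t, a, ?_, ?_⟩
      · intro y hy; exact ht y (mem_Mf.1 hy).1
      · have : Mf p (b + {a}) = Mf p (c + t) := by rw [he]
        rw [Mf_add, Mf_add] at this
        rw [show Mf p ({a} : Multiset I) = {a} by
          rw [show ({a} : Multiset I) = a ::ₘ 0 from rfl, Mf_cons, if_pos hpa]; rfl] at this
        exact this
    · have : Mf p (b + {a}) = Mf p (c + t) := by rw [he]
      rw [Mf_add, Mf_add] at this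
      rw [show Mf p ({a} : Multiset I) = 0 by
        rw [show ({a} : Multiset I) = a ::ₘ 0 from rfl, Mf_cons, if_neg hpa]; rfl] at this
      rw [show Mf p t = 0 from Mf_eq_zero (fun y hy hpy => hpa (hp (ht y hy) hpy))] at this
      rw [add_zero, add_zero] at this
      rw [this]
      exact dmle_refl lt
/-! ### Reduction sequences labelled by lists -/

inductive Steps {E : Type*} (r : I → E → E → Prop) : List I → E → E → Prop
  | nil (a : E) : Steps r [] a a
  | cons {γ : I} {l : List I} {a b c : E} :
      r γ a b → Steps r l b c → Steps r (γ :: l) a c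

theorem Steps.append {E : Type*} {r : I → E → E → Prop} {l₁ l₂ : List I} {a b c : E}
    (h1 : Steps r l₁ a b) (h2 : Steps r l₂ b c) : Steps r (l₁ ++ l₂) a c := by
  induction h1 with
  | nil => simpa using h2
  | cons hs _ ih => exact Steps.cons hs (ih h2)

theorem steps_of_rtg {E : Type*} {r : I → E → E → Prop} {K : Set I} {a b : E}
    (h : Relation.ReflTransGen (LabelStep r K) a b) :
    ∃ l : List I, Steps r l a b ∧ ∀ γ ∈ l, γ ∈ K := by
  induction h with
  | refl => exact ⟨[], Steps.nil a, by simp⟩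
  | tail _hab hbc ih =>
    rcases ih with ⟨l, hl, hK⟩
    rcases hbc with ⟨γ, hγK, hγ⟩
    refine ⟨l ++ [γ], hl.append (Steps.cons hγ (Steps.nil _)), ?_⟩
    intro δ hδ
    rcases List.mem_append.1 hδ with h | h
    · exact hK δ h
    · rcases List.mem_singleton.1 h with rfl
      exact hγK

theorem steps_of_rg {E : Type*} {r : I → E → E → Prop} {K : Set I} {a b : E}
    (h : Relation.ReflGen (LabelStep r K) a b) :
    ∃ l : List I, Steps r l a b ∧ (∀ γ ∈ l, γ ∈ K) ∧ (l = [] ∨ ∃ γ, l = [γ]) := by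
  cases h with
  | refl => exact ⟨[], Steps.nil a, by simp, Or.inl rfl⟩
  | single h =>
    obtain ⟨γ, hγK, hγ⟩ := h
    refine ⟨[γ], Steps.cons hγ (Steps.nil _), ?_, Or.inr ⟨γ, rfl⟩⟩
    intro δ hδ
    rcases List.mem_singleton.1 hδ with rfl
    exact hγK

theorem rtg_of_steps {E : Type*} {r : I → E → E → Prop} {l : List I} {a b : E}
    (h : Steps r l a b) :
    Relation.ReflTransGen (LabelStep r Set.univ) a b := by
  induction h with
  | nil => exact Relation.ReflTransGen.refl
  | cons hs _ ih =>
    exact Relation.ReflTransGen.head ⟨_, Set.mem_univ _, hs⟩ ih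
/-! ### Structure of the measure of a local-diagram valley -/

theorem rho_split {α β : I} {u m v : List I}
    (hu : ∀ γ ∈ u, TG γ α)
    (hm : m = [] ∨ ∃ β', m = [β'] ∧ (TG β' β ∨ β' = β))
    (hv : ∀ γ ∈ v, TG γ α ∨ TG γ β) :
    ∃ B V, mes lt (u ++ m ++ v) = B + V ∧
      ((B = 0 ∧ ∀ x ∈ V, TG x α ∨ TG x β) ∨
       (B = {β} ∧ ∀ x ∈ V, TG x α)) := by
  have hcase : (∀ z ∈ m, TG z β) ∨ m = [β] := by
    rcases hm with rfl | ⟨β', rfl, hβ' | rfl⟩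
    · left; intro z hz; simp at hz
    · left; intro z hz; rcases List.mem_singleton.1 hz with rfl; exact hβ'
    · right; rfl
  rcases hcase with hsmall | rfl
  · -- every element of the whole list is below α or β
    refine ⟨0, mes lt (u ++ m ++ v), (zero_add _).symm, Or.inl ⟨rfl, ?_⟩⟩
    intro x hx
    have hx' := mem_of_mem_mes lt hx
    rcases List.mem_append.1 hx' with hx'' | hxv
    · rcases List.mem_append.1 hx'' with hxu | hxm
      · exact Or.inl (hu x hxu)
      · exact Or.inr (hsmall x hxm)
    · exact hv x hxv
  · -- m = [β]
    rw [List.append_assoc]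
    rw [mes_append lt (l₁ := u) (l₂ := [β] ++ v), Lf_append]
    by_cases hkβ : kp lt u β
    · rw [show Lf (kp lt u) [β] = [β] by rw [Lf_cons, if_pos hkβ]; rfl]
      rw [show ([β] : List I) ++ Lf (kp lt u) v = β :: Lf (kp lt u) v from rfl]
      rw [mes_cons]
      refine ⟨{β}, mes lt u + mes lt (Lf (kp lt [β]) (Lf (kp lt u) v)), ?_,
        Or.inr ⟨rfl, ?_⟩⟩
      · rw [show (β ::ₘ mes lt (Lf (kp lt [β]) (Lf (kp lt u) v)))
            = {β} + mes lt (Lf (kp lt [β]) (Lf (kp lt u) v)) from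
            (Multiset.singleton_add _ _).symm]
        abel
      · intro x hx
        rcases Multiset.mem_add.1 hx with hx1 | hx2
        · exact hu x (mem_of_mem_mes lt hx1)
        · have hx' := mem_of_mem_mes lt hx2
          rcases mem_Lf.1 hx' with ⟨hx'', hkβx⟩
          rcases mem_Lf.1 hx'' with ⟨hxv, _⟩
          rcases hv x hxv with h | h
          · exact h
          · exact absurd ⟨β, by simp, h⟩ hkβx
    · rw [show Lf (kp lt u) [β] = [] by
        rw [Lf_cons, if_neg hkβ]; rfl]
      rw [List.nil_append]
      refine ⟨0, _, (zero_add _).symm, Or.inl ⟨rfl, ?_⟩⟩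
      intro x hx
      rcases Multiset.mem_add.1 hx with hx1 | hx2
      · exact Or.inl (hu x (mem_of_mem_mes lt hx1))
      · have hx' := mem_of_mem_mes lt hx2
        exact hv x (mem_Lf.1 hx').1

theorem rho_elem {α β : I} {u m v : List I}
    (hu : ∀ γ ∈ u, TG γ α)
    (hm : m = [] ∨ ∃ β', m = [β'] ∧ (TG β' β ∨ β' = β))
    (hv : ∀ γ ∈ v, TG γ α ∨ TG γ β) :
    ∀ z ∈ u ++ m ++ v, TG z α ∨ TG z β ∨ z = β := by
  intro z hz
  rcases List.mem_append.1 hz with hz' | hzv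
  · rcases List.mem_append.1 hz' with hzu | hzm
    · exact Or.inl (hu z hzu)
    · rcases hm with rfl | ⟨β', rfl, hβ'⟩
      · simp at hzm
      · rcases List.mem_singleton.1 hzm with rfl
        rcases hβ' with h | rfl
        · exact Or.inr (Or.inl h)
        · exact Or.inr (Or.inr rfl)
  · rcases hv z hzv with h | h
    · exact Or.inl h
    · exact Or.inr (Or.inl h)

theorem core_dichotomy {α β : I} {u m v : List I}
    (hu : ∀ γ ∈ u, TG γ α)
    (hm : m = [] ∨ ∃ β', m = [β'] ∧ (TG β' β ∨ β' = β))
    (hv : ∀ γ ∈ v, TG γ α ∨ TG γ β) :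
    (∀ x ∈ Mf (kp lt [α]) (mes lt (u ++ m ++ v)), TG x β) ∨
      Mf (kp lt [α]) (mes lt (u ++ m ++ v)) = {β} := by
  rcases rho_split lt hu hm hv with ⟨B, V, hBV, ⟨rfl, hVel⟩ | ⟨rfl, hVel⟩⟩
  · left
    intro x hx
    rw [hBV, zero_add] at hx
    rcases mem_Mf.1 hx with ⟨hxV, hkx⟩
    rcases hVel x hxV with h | h
    · exact absurd ⟨α, by simp, h⟩ hkx
    · exact h
  · rw [hBV, Mf_add]
    rw [show Mf (kp lt [α]) V = 0 from
      Mf_eq_zero (fun x hx hk => hk ⟨α, by simp, hVel x hx⟩)]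
    rw [add_zero]
    by_cases hβα : TransGen lt β α
    · left
      intro x hx
      rcases mem_Mf.1 hx with ⟨hxB, hkx⟩
      exact absurd ⟨α, by simp, by rcases Multiset.mem_singleton.1 hxB with rfl; exact hβα⟩ hkx
    · right
      have hkp : kp lt [α] β := by
        intro hb
        rcases hb with ⟨z, hz, hβz⟩
        rcases List.mem_singleton.1 hz with rfl
        exact hβα hβz
      rw [show ({β} : Multiset I) = β ::ₘ 0 from rfl, Mf_cons, if_pos hkp]
      rfl
/-! ### Bound on the labels occurring in a recursively-produced valley -/

theorem mes_elem_bound {α β : I} {ρ σ₀ Q : List I}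
    (hρe : ∀ z ∈ ρ, TG z α ∨ TG z β ∨ z = β)
    (hQ : dmle lt (mes lt (Lf (kp lt ρ) Q)) (mes lt σ₀))
    (hwf : WellFounded lt) :
    ∀ x ∈ mes lt Q, (∃ s ∈ σ₀, x = s ∨ TG x s) ∨ TG x α ∨ TG x β := by
  intro x hx
  have hsplit := mes_split lt (DC_kp lt (L := ρ)) (l := Q)
  rw [hsplit] at hx
  rcases Multiset.mem_add.1 hx with hx1 | hx2
  · rcases dmle_elem lt hwf hQ x hx1 with ⟨s, hs, hxs⟩
    exact Or.inl ⟨s, mem_of_mem_mes lt hs, hxs⟩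
  · rcases mem_Mf.1 hx2 with ⟨_, hbel⟩
    rcases not_not.1 hbel with ⟨z, hz, hxz⟩
    rcases hρe z hz with h | h | rfl
    · exact Or.inr (Or.inl (hxz.trans h))
    · exact Or.inr (Or.inr (hxz.trans h))
    · exact Or.inr (Or.inr hxz)

theorem list_elem_bound {α β : I} {ρ σ₀ Q : List I}
    (hρe : ∀ z ∈ ρ, TG z α ∨ TG z β ∨ z = β)
    (hQ : dmle lt (mes lt (Lf (kp lt ρ) Q)) (mes lt σ₀))
    (hwf : WellFounded lt) :
    ∀ q ∈ Q, (∃ s ∈ σ₀, q = s ∨ TG q s) ∨ TG q α ∨ TG q β := by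
  intro q hq
  rcases mes_dominates_aux lt Q.length Q le_rfl q hq with h | ⟨y, hy, hqy⟩
  · exact mes_elem_bound lt hρe hQ hwf q h
  · rcases mes_elem_bound lt hρe hQ hwf y hy with ⟨s, hs, hys⟩ | h | h
    · refine Or.inl ⟨s, hs, Or.inr ?_⟩
      rcases hys with rfl | hys
      · exact hqy
      · exact hqy.trans hys
    · exact Or.inr (Or.inl (hqy.trans h))
    · exact Or.inr (Or.inr (hqy.trans h))

/-! ### Measure decrease for the three recursive calls -/

theorem meas_first {α β : I} {σ₀ τ₀ u m v : List I}
    (hu : ∀ γ ∈ u, TG γ α)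
    (hm : m = [] ∨ ∃ β', m = [β'] ∧ (TG β' β ∨ β' = β))
    (hv : ∀ γ ∈ v, TG γ α ∨ TG γ β) :
    dmlt lt (mes lt σ₀ + mes lt (u ++ m ++ v))
      (mes lt (α :: σ₀) + mes lt (β :: τ₀)) := by
  have hsσ := mes_split lt (DC_kp lt (L := [α])) (l := σ₀)
  set Sα := mes lt (Lf (kp lt [α]) σ₀) with hSα
  set sα := Mf (fun x => ¬ kp lt [α] x) (mes lt σ₀) with hsα
  have hsαel : ∀ x ∈ sα, TG x α := by
    intro x hx
    rcases mem_Mf.1 hx with ⟨_, hk⟩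
    rcases not_not.1 hk with ⟨z, hz, hxz⟩
    rcases List.mem_singleton.1 hz with rfl
    exact hxz
  have hconsα : mes lt (α :: σ₀) = {α} + Sα := by
    rw [mes_cons, Multiset.singleton_add]
  have hconsβ : mes lt (β :: τ₀) = {β} + mes lt (Lf (kp lt [β]) τ₀) := by
    rw [mes_cons, Multiset.singleton_add]
  set Tβ := mes lt (Lf (kp lt [β]) τ₀) with hTβ
  rcases rho_split lt hu hm hv with ⟨B, V, hBV, ⟨rfl, hVel⟩ | ⟨rfl, hVel⟩⟩
  · -- B = 0 : everything below α or β
    have key : dmlt lt (Sα + (sα + V)) (Sα + ({α} + ({β} + Tβ))) := by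
      refine dmlt_exchange lt Sα (sα + V) (by simp) ?_
      intro y hy
      rcases Multiset.mem_add.1 hy with h | h
      · exact ⟨α, by simp, hsαel y h⟩
      · rcases hVel y h with h' | h'
        · exact ⟨α, by simp, h'⟩
        · exact ⟨β, by simp, h'⟩
    have e1 : Sα + (sα + V) = mes lt σ₀ + mes lt (u ++ m ++ v) := by
      rw [hBV, zero_add, hsσ]; abel
    have e2 : Sα + ({α} + ({β} + Tβ)) =
        mes lt (α :: σ₀) + mes lt (β :: τ₀) := by
      rw [hconsα, hconsβ]; abel
    rwa [e1, e2] at key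
  · -- B = {β}
    have key : dmlt lt ((Sα + {β}) + (sα + V)) ((Sα + {β}) + ({α} + Tβ)) := by
      refine dmlt_exchange lt _ (sα + V) (by simp) ?_
      intro y hy
      rcases Multiset.mem_add.1 hy with h | h
      · exact ⟨α, by simp, hsαel y h⟩
      · exact ⟨α, by simp, hVel y h⟩
    have e1 : (Sα + {β}) + (sα + V) = mes lt σ₀ + mes lt (u ++ m ++ v) := by
      rw [hBV, hsσ]; abel
    have e2 : (Sα + {β}) + ({α} + Tβ) =
        mes lt (α :: σ₀) + mes lt (β :: τ₀) := by
      rw [hconsα, hconsβ]; abel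
    rwa [e1, e2] at key

theorem meas_corner {α β : I} {σ₀ τ₀ ρ₁ ρ₂ Q S : List I}
    (hρ₁e : ∀ z ∈ ρ₁, TG z α ∨ TG z β ∨ z = β)
    (hρ₂e : ∀ z ∈ ρ₂, TG z β ∨ TG z α ∨ z = α)
    (hQ : dmle lt (mes lt (Lf (kp lt ρ₁) Q)) (mes lt σ₀))
    (hS : dmle lt (mes lt (Lf (kp lt ρ₂) S)) (mes lt τ₀)) :
    dmlt lt (mes lt Q + mes lt S)
      (mes lt (α :: σ₀) + mes lt (β :: τ₀)) := by
  have hsQ := mes_split lt (DC_kp lt (L := ρ₁)) (l := Q)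
  have hsS := mes_split lt (DC_kp lt (L := ρ₂)) (l := S)
  set DQ := Mf (fun x => ¬ kp lt ρ₁ x) (mes lt Q) with hDQ
  set DS := Mf (fun x => ¬ kp lt ρ₂ x) (mes lt S) with hDS
  have hDQel : ∀ x ∈ DQ, TG x α ∨ TG x β := by
    intro x hx
    rcases mem_Mf.1 hx with ⟨_, hk⟩
    rcases not_not.1 hk with ⟨z, hz, hxz⟩
    rcases hρ₁e z hz with h | h | rfl
    · exact Or.inl (hxz.trans h)
    · exact Or.inr (hxz.trans h)
    · exact Or.inr hxz
  have hDSel : ∀ x ∈ DS, TG x α ∨ TG x β := by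
    intro x hx
    rcases mem_Mf.1 hx with ⟨_, hk⟩
    rcases not_not.1 hk with ⟨z, hz, hxz⟩
    rcases hρ₂e z hz with h | h | rfl
    · exact Or.inr (hxz.trans h)
    · exact Or.inl (hxz.trans h)
    · exact Or.inl hxz
  -- first, dominate by (mes σ₀ + mes τ₀) + (DQ + DS)
  have step1 : dmle lt (mes lt Q + mes lt S)
      ((mes lt σ₀ + mes lt τ₀) + (DQ + DS)) := by
    have h1 : dmle lt (mes lt Q) (mes lt σ₀ + DQ) := by
      rw [hsQ]
      exact dmle_add_right lt DQ hQ
    have h2 : dmle lt (mes lt S) (mes lt τ₀ + DS) := by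
      rw [hsS]
      exact dmle_add_right lt DS hS
    have := dmle_add lt h1 h2
    refine dmle_trans lt this (dmle_of_le lt (le_of_eq ?_))
    abel
  -- then, strict decrease
  have hsσ := mes_split lt (DC_kp lt (L := [α])) (l := σ₀)
  have hsτ := mes_split lt (DC_kp lt (L := [β])) (l := τ₀)
  set Sα := mes lt (Lf (kp lt [α]) σ₀) with hSα
  set Tβ := mes lt (Lf (kp lt [β]) τ₀) with hTβ
  set sα := Mf (fun x => ¬ kp lt [α] x) (mes lt σ₀) with hsα
  set sβ := Mf (fun x => ¬ kp lt [β] x) (mes lt τ₀) with hsβ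
  have hsαel : ∀ x ∈ sα, TG x α := by
    intro x hx
    rcases mem_Mf.1 hx with ⟨_, hk⟩
    rcases not_not.1 hk with ⟨z, hz, hxz⟩
    rcases List.mem_singleton.1 hz with rfl
    exact hxz
  have hsβel : ∀ x ∈ sβ, TG x β := by
    intro x hx
    rcases mem_Mf.1 hx with ⟨_, hk⟩
    rcases not_not.1 hk with ⟨z, hz, hxz⟩
    rcases List.mem_singleton.1 hz with rfl
    exact hxz
  have step2 : dmlt lt ((Sα + Tβ) + (sα + sβ + DQ + DS))
      ((Sα + Tβ) + ({α} + {β})) := by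
    refine dmlt_exchange lt _ _ (by simp) ?_
    intro y hy
    have mem_or : TG y α ∨ TG y β → ∃ x ∈ ({α} : Multiset I) + {β}, TG y x := by
      rintro (h | h)
      · exact ⟨α, by simp, h⟩
      · exact ⟨β, by simp, h⟩
    rcases Multiset.mem_add.1 hy with hy1 | hy4
    · rcases Multiset.mem_add.1 hy1 with hy2 | hy3
      · rcases Multiset.mem_add.1 hy2 with hy5 | hy6
        · exact mem_or (Or.inl (hsαel y hy5))
        · exact mem_or (Or.inr (hsβel y hy6))
      · exact mem_or (hDQel y hy3)
    · exact mem_or (hDSel y hy4)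
  have e1 : (Sα + Tβ) + (sα + sβ + DQ + DS) =
      (mes lt σ₀ + mes lt τ₀) + (DQ + DS) := by
    rw [hsσ, hsτ]; abel
  have e2 : (Sα + Tβ) + ({α} + {β}) =
      mes lt (α :: σ₀) + mes lt (β :: τ₀) := by
    rw [mes_cons, mes_cons, ← hSα, ← hTβ, ← Multiset.singleton_add,
      ← Multiset.singleton_add]
    abel
  rw [e1, e2] at step2
  exact dmlt_of_dmle_dmlt lt step1 step2
/-! ### Assembling the final valley invariant -/

theorem assemble (hwf : WellFounded lt) {α β : I} {σ₀ τ₀ u₁ m₁ v₁ ρ₂ P Q S F : List I}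
    (hu₁ : ∀ γ ∈ u₁, TG γ α)
    (hm₁ : m₁ = [] ∨ ∃ β', m₁ = [β'] ∧ (TG β' β ∨ β' = β))
    (hv₁ : ∀ γ ∈ v₁, TG γ α ∨ TG γ β)
    (hρ₂e : ∀ z ∈ ρ₂, TG z β ∨ TG z α ∨ z = α)
    (hP : dmle lt (mes lt (Lf (kp lt σ₀) P)) (mes lt (u₁ ++ m₁ ++ v₁)))
    (hQ : dmle lt (mes lt (Lf (kp lt (u₁ ++ m₁ ++ v₁)) Q)) (mes lt σ₀))
    (hS : dmle lt (mes lt (Lf (kp lt ρ₂) S)) (mes lt τ₀))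
    (hF : dmle lt (mes lt (Lf (kp lt Q) F)) (mes lt S)) :
    dmle lt (mes lt (Lf (kp lt (α :: σ₀)) (P ++ F))) (mes lt (β :: τ₀)) := by
  set ρ₁ : List I := u₁ ++ m₁ ++ v₁ with hρ₁
  have hρ₁e : ∀ z ∈ ρ₁, TG z α ∨ TG z β ∨ z = β := rho_elem lt hu₁ hm₁ hv₁
  -- keep predicates
  set kσ : I → Prop := kp lt (α :: σ₀) with hkσ
  set k' : I → Prop := fun y => kp lt P y ∧ kσ y with hk'
  have hDCσ : DC lt kσ := DC_kp lt
  have hDCk' : DC lt k' := DC_and lt (DC_kp lt) hDCσ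
  have hkσ_not_α : ∀ x, kσ x → ¬ TG x α := by
    intro x hx h
    exact hx ⟨α, by simp, h⟩
  have hkσ_not_σ₀ : ∀ x, kσ x → ¬ bel lt x σ₀ := by
    intro x hx hb
    rcases hb with ⟨z, hz, hxz⟩
    exact hx ⟨z, by simp [hz], hxz⟩
  -- decompose the left-hand side
  have hLHS : mes lt (Lf kσ (P ++ F)) =
      Mf kσ (mes lt P) + Mf k' (mes lt F) := by
    rw [mes_Lf lt hDCσ, mes_append lt, Mf_add]
    congr 1
    rw [mes_Lf lt (DC_kp lt), Mf_Mf]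
  set A := Mf kσ (mes lt P) with hA
  -- bound A by the filtered core of ρ₁
  have hAcore : dmle lt A (Mf (kp lt [α]) (mes lt ρ₁)) := by
    have e : A = Mf (kp lt [α]) (mes lt (Lf (kp lt σ₀) P)) := by
      rw [mes_Lf lt (DC_kp lt), Mf_Mf]
      apply Mf_congr
      intro x _
      constructor
      · intro hx
        constructor
        · intro hb; exact hkσ_not_σ₀ x hx hb
        · intro hb; rcases hb with ⟨z, hz, hxz⟩
          rcases List.mem_singleton.1 hz with rfl
          exact hkσ_not_α x hx hxz
      · rintro ⟨h1, h2⟩ hb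
        rcases hb with ⟨z, hz, hxz⟩
        rcases List.mem_cons.1 hz with rfl | hz'
        · exact h2 ⟨z, by simp, hxz⟩
        · exact h1 ⟨z, hz', hxz⟩
    rw [e]
    exact dmle_Mf lt (DC_kp lt) hP
  have hcore := core_dichotomy lt hu₁ hm₁ hv₁
  rw [← hρ₁] at hcore
  have hAβ : dmle lt A {β} := by
    rcases hcore with h | h
    · exact dmle_trans lt hAcore (dmle_of_dn lt (fun y hy => ⟨β, by simp, h y hy⟩))
    · rw [h] at hAcore
      exact hAcore
  have hAelem : ∀ a ∈ A, a = β ∨ TG a β := by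
    intro a ha
    rcases dmle_elem lt hwf hAcore a ha with ⟨c, hc, hac⟩
    rcases hcore with h | h
    · have := h c hc
      rcases hac with h' | h'
      · subst h'; exact Or.inr this
      · exact Or.inr (h'.trans this)
    · rw [h] at hc
      rcases Multiset.mem_singleton.1 hc with rfl
      exact hac.imp_right id
  -- decompose the B part
  have hsF := mes_split lt (DC_kp lt (L := Q)) (l := F)
  set DF := Mf (fun x => ¬ kp lt Q x) (mes lt F) with hDF
  have hsS := mes_split lt (DC_kp lt (L := ρ₂)) (l := S)
  set DS := Mf (fun x => ¬ kp lt ρ₂ x) (mes lt S) with hDS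
  have hsτ := mes_split lt (DC_kp lt (L := [β])) (l := τ₀)
  set Tβ := mes lt (Lf (kp lt [β]) τ₀) with hTβ
  set sβ := Mf (fun x => ¬ kp lt [β] x) (mes lt τ₀) with hsβ
  have hBbound : dmle lt (Mf k' (mes lt F))
      ((Mf k' Tβ + Mf k' sβ + Mf k' DS) + Mf k' DF) := by
    have h1 : Mf k' (mes lt F) = Mf k' (mes lt (Lf (kp lt Q) F)) + Mf k' DF := by
      rw [hsF] at *
      exact Mf_add
    have h2 : dmle lt (Mf k' (mes lt (Lf (kp lt Q) F))) (Mf k' (mes lt S)) :=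
      dmle_Mf lt hDCk' hF
    have h3 : Mf k' (mes lt S) = Mf k' (mes lt (Lf (kp lt ρ₂) S)) + Mf k' DS := by
      rw [hsS] at *
      exact Mf_add
    have h4 : dmle lt (Mf k' (mes lt (Lf (kp lt ρ₂) S))) (Mf k' (mes lt τ₀)) :=
      dmle_Mf lt hDCk' hS
    have h5 : Mf k' (mes lt τ₀) = Mf k' Tβ + Mf k' sβ := by
      rw [hsτ] at *
      exact Mf_add
    rw [h1]
    refine dmle_add lt ?_ (dmle_refl lt)
    refine dmle_trans lt h2 ?_
    rw [h3]
    refine dmle_trans lt (dmle_add lt h4 (dmle_refl lt)) ?_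
    rw [h5]
    exact dmle_of_le lt (le_of_eq (by abel))
  -- elementwise facts about the junk parts
  have hsβel : ∀ x ∈ sβ, TG x β := by
    intro x hx
    rcases mem_Mf.1 hx with ⟨_, hk⟩
    rcases not_not.1 hk with ⟨z, hz, hxz⟩
    rcases List.mem_singleton.1 hz with rfl
    exact hxz
  have hDSel : ∀ x ∈ DS, TG x α ∨ TG x β := by
    intro x hx
    rcases mem_Mf.1 hx with ⟨_, hk⟩
    rcases not_not.1 hk with ⟨z, hz, hxz⟩
    rcases hρ₂e z hz with h | h | rfl
    · exact Or.inr (hxz.trans h)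
    · exact Or.inl (hxz.trans h)
    · exact Or.inl hxz
  have hDFel : ∀ x ∈ DF, bel lt x σ₀ ∨ TG x α ∨ TG x β := by
    intro x hx
    rcases mem_Mf.1 hx with ⟨_, hk⟩
    rcases not_not.1 hk with ⟨q, hq, hxq⟩
    rcases list_elem_bound lt hρ₁e hQ hwf q hq with ⟨s, hs, hqs⟩ | h | h
    · rcases hqs with h' | h'
      · subst h'
        exact Or.inl ⟨q, hs, hxq⟩
      · exact Or.inl ⟨s, hs, hxq.trans h'⟩
    · exact Or.inr (Or.inl (hxq.trans h))
    · exact Or.inr (Or.inr (hxq.trans h))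
  have hWsβ : ∀ x ∈ Mf k' sβ, TG x β := fun x hx => hsβel x (mem_Mf.1 hx).1
  have hWDS : ∀ x ∈ Mf k' DS, TG x β := by
    intro x hx
    rcases mem_Mf.1 hx with ⟨hx1, hk1, hk2⟩
    rcases hDSel x hx1 with h | h
    · exact absurd h (hkσ_not_α x hk2)
    · exact h
  have hWDF : ∀ x ∈ Mf k' DF, TG x β := by
    intro x hx
    rcases mem_Mf.1 hx with ⟨hx1, hk1, hk2⟩
    rcases hDFel x hx1 with h | h | h
    · exact absurd h (hkσ_not_σ₀ x hk2)
    · exact absurd h (hkσ_not_α x hk2)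
    · exact h
  have hconsβ : mes lt (β :: τ₀) = {β} + Tβ := by
    rw [mes_cons, Multiset.singleton_add]
  -- main case split : is β a surviving label of P ?
  by_cases hβP : β ∈ Lf kσ P
  · -- the junk is all filtered away by `kp P`
    have hkill : ∀ x, TG x β → ¬ k' x := by
      intro x hxβ hk
      exact hk.1 ⟨β, (mem_Lf.1 hβP).1, hxβ⟩
    have hZ1 : Mf k' sβ = 0 :=
      Mf_eq_zero (fun x hx hk => hkill x (hsβel x hx) hk)
    have hZ2 : Mf k' DS = 0 := by
      refine Mf_eq_zero (fun x hx hk => ?_)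
      rcases hDSel x hx with h | h
      · exact hkσ_not_α x hk.2 h
      · exact hkill x h hk
    have hZ3 : Mf k' DF = 0 := by
      refine Mf_eq_zero (fun x hx hk => ?_)
      rcases hDFel x hx with h | h | h
      · exact hkσ_not_σ₀ x hk.2 h
      · exact hkσ_not_α x hk.2 h
      · exact hkill x h hk
    rw [hLHS]
    refine dmle_trans lt (dmle_add lt (dmle_refl lt) hBbound) ?_
    rw [hZ1, hZ2, hZ3]
    have : (Mf k' Tβ + 0 + 0) + 0 = Mf k' Tβ := by abel
    rw [this]
    rw [hconsβ]
    exact dmle_add lt hAβ (dmle_of_le lt (le_trans Mf_le (le_of_eq rfl)))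
  · -- all elements of A are strictly below β
    have hAel' : ∀ a ∈ A, TG a β := by
      intro a ha
      rcases hAelem a ha with rfl | h
      · exfalso
        apply hβP
        rcases mem_Mf.1 ha with ⟨haP, hkσa⟩
        exact mem_Lf.2 ⟨mem_of_mem_mes lt haP, hkσa⟩
      · exact h
    set T' := Mf k' Tβ with hT'
    rcases Multiset.le_iff_exists_add.1 (Mf_le (p := k') (s := Tβ)) with ⟨T'', hT''⟩
    have step : dmlt lt (T' + (A + (Mf k' sβ + Mf k' DS + Mf k' DF)))
        (T' + ({β} + T'')) := by
      refine dmlt_exchange lt _ _ (by simp) ?_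
      intro y hy
      refine ⟨β, by simp, ?_⟩
      rcases Multiset.mem_add.1 hy with h | h
      · exact hAel' y h
      · rcases Multiset.mem_add.1 h with h' | h'
        · rcases Multiset.mem_add.1 h' with h'' | h''
          · exact hWsβ y h''
          · exact hWDS y h''
        · exact hWDF y h'
    have e1 : T' + ({β} + T'') = mes lt (β :: τ₀) := by
      rw [hconsβ, hT'']
      abel
    rw [hLHS]
    refine dmle_trans lt (dmle_add lt (dmle_refl lt) hBbound) ?_
    refine dmle_trans lt (dmle_of_le lt (le_of_eq (show
      A + ((T' + Mf k' sβ + Mf k' DS) + Mf k' DF) =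
      T' + (A + (Mf k' sβ + Mf k' DS + Mf k' DF)) by abel))) ?_
    rw [← e1]
    exact dmle_of_dmlt lt step
/-! ### The main lemma -/

theorem main_lemma {E : Type*} {r : I → E → E → Prop} (hwf : WellFounded lt)
    (hdec : ∀ (α β : I) (a b c : E), r α a b → r β a c →
      ∃ b₁ b₂ d, Relation.ReflTransGen (LabelStep r {γ | lt γ α}) b b₁ ∧
        Relation.ReflGen (LabelStep r {γ | lt γ β ∨ γ = β}) b₁ b₂ ∧
        Relation.ReflTransGen (LabelStep r {γ | lt γ α ∨ lt γ β}) b₂ d ∧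
      ∃ c₁ c₂, Relation.ReflTransGen (LabelStep r {γ | lt γ β}) c c₁ ∧
        Relation.ReflGen (LabelStep r {γ | lt γ α ∨ γ = α}) c₁ c₂ ∧
        Relation.ReflTransGen (LabelStep r {γ | lt γ α ∨ lt γ β}) c₂ d) :
    ∀ (M : Multiset I) (σ τ : List I) (a b c : E), mes lt σ + mes lt τ = M →
      Steps r σ a b → Steps r τ a c →
      ∃ (d : E) (τ' σ' : List I), Steps r τ' b d ∧ Steps r σ' c d ∧
        dmle lt (mes lt (Lf (kp lt σ) τ')) (mes lt τ) ∧
        dmle lt (mes lt (Lf (kp lt τ) σ')) (mes lt σ) := by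
  intro M
  induction M using (dmlt_wf lt hwf).induction with
  | _ M IH =>
  intro σ τ a b c hM hσ hτ
  cases hσ with
  | nil =>
    refine ⟨c, τ, [], hτ, Steps.nil c, ?_, ?_⟩
    · rw [Lf_eq_self (fun x _ => by simp [kp])]
      exact dmle_refl lt
    · rw [show Lf (kp lt τ) ([] : List I) = [] from rfl]
      exact dmle_refl lt
  | @cons α σ₀ _ b₁ _ hstepα hrestσ =>
  cases hτ with
  | nil =>
    refine ⟨b, [], α :: σ₀, Steps.nil b, Steps.cons hstepα hrestσ, ?_, ?_⟩
    · rw [show Lf (kp lt (α :: σ₀)) ([] : List I) = [] from rfl]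
      exact dmle_refl lt
    · rw [Lf_eq_self (fun x _ => by simp [kp])]
      exact dmle_refl lt
  | @cons β τ₀ _ c₁ _ hstepβ hrestτ =>
    -- resolve the local peak
    obtain ⟨b₂, b₃, d₀, h1, h2, h3, c₂, c₃, h4, h5, h6⟩ :=
      hdec α β a b₁ c₁ hstepα hstepβ
    obtain ⟨u₁, su₁, hu₁K⟩ := steps_of_rtg h1
    obtain ⟨m₁, sm₁, hm₁K, hm₁shape⟩ := steps_of_rg h2
    obtain ⟨v₁, sv₁, hv₁K⟩ := steps_of_rtg h3
    obtain ⟨u₂, su₂, hu₂K⟩ := steps_of_rtg h4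
    obtain ⟨m₂, sm₂, hm₂K, hm₂shape⟩ := steps_of_rg h5
    obtain ⟨v₂, sv₂, hv₂K⟩ := steps_of_rtg h6
    have hu₁ : ∀ γ ∈ u₁, Relation.TransGen lt γ α :=
      fun γ h => Relation.TransGen.single (hu₁K γ h)
    have hm₁ : m₁ = [] ∨ ∃ β', m₁ = [β'] ∧
        (Relation.TransGen lt β' β ∨ β' = β) := by
      rcases hm₁shape with rfl | ⟨γ, rfl⟩
      · exact Or.inl rfl
      · refine Or.inr ⟨γ, rfl, ?_⟩
        rcases hm₁K γ (by simp) with h | h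
        · exact Or.inl (Relation.TransGen.single h)
        · exact Or.inr h
    have hv₁ : ∀ γ ∈ v₁, Relation.TransGen lt γ α ∨ Relation.TransGen lt γ β := by
      intro γ h
      rcases hv₁K γ h with h' | h'
      · exact Or.inl (Relation.TransGen.single h')
      · exact Or.inr (Relation.TransGen.single h')
    have hu₂ : ∀ γ ∈ u₂, Relation.TransGen lt γ β :=
      fun γ h => Relation.TransGen.single (hu₂K γ h)
    have hm₂ : m₂ = [] ∨ ∃ α', m₂ = [α'] ∧
        (Relation.TransGen lt α' α ∨ α' = α) := by
      rcases hm₂shape with rfl | ⟨γ, rfl⟩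
      · exact Or.inl rfl
      · refine Or.inr ⟨γ, rfl, ?_⟩
        rcases hm₂K γ (by simp) with h | h
        · exact Or.inl (Relation.TransGen.single h)
        · exact Or.inr h
    have hv₂ : ∀ γ ∈ v₂, Relation.TransGen lt γ β ∨ Relation.TransGen lt γ α := by
      intro γ h
      rcases hv₂K γ h with h' | h'
      · exact Or.inr (Relation.TransGen.single h')
      · exact Or.inl (Relation.TransGen.single h')
    -- the two local valleys
    have sρ₁ : Steps r (u₁ ++ m₁ ++ v₁) b₁ d₀ := (su₁.append sm₁).append sv₁
    have sρ₂ : Steps r (u₂ ++ m₂ ++ v₂) c₁ d₀ := (su₂.append sm₂).append sv₂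
    have hρ₁e := rho_elem lt hu₁ hm₁ hv₁
    have hρ₂e := rho_elem lt hu₂ hm₂ hv₂
    -- first recursive call : peak (σ₀ , ρ₁) at b₁
    have meas1 : dmlt lt (mes lt σ₀ + mes lt (u₁ ++ m₁ ++ v₁)) M := by
      rw [← hM]
      exact meas_first lt hu₁ hm₁ hv₁
    obtain ⟨y, P, Q, sP, sQ, hP, hQ⟩ :=
      IH _ meas1 σ₀ (u₁ ++ m₁ ++ v₁) b₁ b d₀ rfl hrestσ sρ₁
    -- second recursive call : peak (τ₀ , ρ₂) at c₁
    have meas2 : dmlt lt (mes lt τ₀ + mes lt (u₂ ++ m₂ ++ v₂)) M := by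
      rw [← hM, add_comm (mes lt (α :: σ₀)) (mes lt (β :: τ₀))]
      exact meas_first lt hu₂ hm₂ hv₂
    obtain ⟨w, R, S, sR, sS, hR, hS⟩ :=
      IH _ meas2 τ₀ (u₂ ++ m₂ ++ v₂) c₁ c d₀ rfl hrestτ sρ₂
    -- third recursive call : peak (Q , S) at d₀
    have meas3 : dmlt lt (mes lt Q + mes lt S) M := by
      rw [← hM]
      exact meas_corner lt hρ₁e hρ₂e hQ hS
    obtain ⟨f, F, G, sF, sG, hF, hG⟩ :=
      IH _ meas3 Q S d₀ y w rfl sQ sS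
    -- assemble the answer
    refine ⟨f, P ++ F, R ++ G, sP.append sF, sR.append sG, ?_, ?_⟩
    · exact assemble lt hwf hu₁ hm₁ hv₁ hρ₂e hP hQ hS hF
    · exact assemble lt hwf hu₂ hm₂ hv₂ hρ₁e hR hS hQ hG
end DDProof

/-- Van Oostrom's decreasing-diagrams theorem: if every local peak of a
family of relations indexed by a well-founded strict order is decreasing,
then the union of the family is confluent. -/
theorem decreasing_diagrams {I E : Type*} (r : I → E → E → Prop)
    (lt : I → I → Prop)
    (hwf : WellFounded fun α β => lt α β)  -- lt α β : α ≺ β; well-founded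
    (hdec : ∀ (α β : I) (a b c : E), r α a b → r β a c →
      ∃ b₁ b₂ d, Relation.ReflTransGen (LabelStep r {γ | lt γ α}) b b₁ ∧
        Relation.ReflGen (LabelStep r {γ | lt γ β ∨ γ = β}) b₁ b₂ ∧
        Relation.ReflTransGen (LabelStep r {γ | lt γ α ∨ lt γ β}) b₂ d ∧
      ∃ c₁ c₂, Relation.ReflTransGen (LabelStep r {γ | lt γ β}) c c₁ ∧
        Relation.ReflGen (LabelStep r {γ | lt γ α ∨ γ = α}) c₁ c₂ ∧
        Relation.ReflTransGen (LabelStep r {γ | lt γ α ∨ lt γ β}) c₂ d) :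
    ∀ a b c, Relation.ReflTransGen (LabelStep r Set.univ) a b →
      Relation.ReflTransGen (LabelStep r Set.univ) a c →
      ∃ d, Relation.ReflTransGen (LabelStep r Set.univ) b d ∧
        Relation.ReflTransGen (LabelStep r Set.univ) c d := by
  intro a b c hab hac
  obtain ⟨σ, hσ, -⟩ := DDProof.steps_of_rtg hab
  obtain ⟨τ, hτ, -⟩ := DDProof.steps_of_rtg hac
  obtain ⟨d, τ', σ', hτ', hσ', -, -⟩ :=
    DDProof.main_lemma lt hwf hdec (DDProof.mes lt σ + DDProof.mes lt τ)
      σ τ a b c rfl hσ hτ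
  exact ⟨d, DDProof.rtg_of_steps hτ', DDProof.rtg_of_steps hσ'⟩
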